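/- Let ℓ and m be axiomatic length functions on a group G that have compatible combinatorics and are coherently oriented. Then ℓ + m satisfies length-function axiom V: for all g, h ∈ G with (ℓ+m)(g) > 0 and (ℓ+m)(h) > 0, either (ℓ+m)(gh) = (ℓ+m)(gh⁻¹) > (ℓ+m)(g) + (ℓ+m)(h), or max{(ℓ+m)(gh), (ℓ+m)(gh⁻¹)} = (ℓ+m)(g) + (ℓ+m)(h). -/

import Mathlib

/-- An axiomatic length function on a group `G` (Culler–Morgan / Parry axioms I–VI). -/
def IsLengthFunction {G : Type*} [Group G] (ℓ : G → ℝ) : Prop :=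
  (∀ g : G, 0 ≤ ℓ g) ∧
  -- (I)
  ℓ 1 = 0 ∧
  -- (II)
  (∀ g : G, ℓ g = ℓ g⁻¹) ∧
  -- (III)
  (∀ g h : G, ℓ (h * g * h⁻¹) = ℓ g) ∧
  -- (IV)
  (∀ g h : G, ℓ (g * h) = ℓ (g * h⁻¹) ∨
    max (ℓ (g * h)) (ℓ (g * h⁻¹)) ≤ ℓ g + ℓ h) ∧
  -- (V)
  (∀ g h : G, 0 < ℓ g → 0 < ℓ h →
    (ℓ (g * h) = ℓ (g * h⁻¹) ∧ ℓ g + ℓ h < ℓ (g * h)) ∨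
    max (ℓ (g * h)) (ℓ (g * h⁻¹)) = ℓ g + ℓ h) ∧
  -- (VI)
  (∃ g h : G, 0 < ℓ g + ℓ h - ℓ (g * h⁻¹) ∧
    ℓ g + ℓ h - ℓ (g * h⁻¹) < 2 * min (ℓ g) (ℓ h))

/-- The overlap set `O^ℓ`: pairs of distinct elements with `ℓ(gh) ≠ ℓ(gh⁻¹)`. -/
def OverlapSet {G : Type*} [Group G] (ℓ : G → ℝ) : Set (G × G) :=
  {p : G × G | p.1 ≠ p.2 ∧ ℓ (p.1 * p.2) ≠ ℓ (p.1 * p.2⁻¹)}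

/-- The disjoint set `D^ℓ`: pairs of distinct elements with
`ℓ(gh) = ℓ(gh⁻¹) > ℓ(g) + ℓ(h)`. -/
def DisjointSet {G : Type*} [Group G] (ℓ : G → ℝ) : Set (G × G) :=
  {p : G × G | p.1 ≠ p.2 ∧ ℓ (p.1 * p.2) = ℓ (p.1 * p.2⁻¹) ∧
    ℓ p.1 + ℓ p.2 < ℓ (p.1 * p.2)}

/-- `ℓ` and `m` have compatible combinatorics if `O^ℓ ∩ D^m = ∅ = D^ℓ ∩ O^m`. -/
def CompatibleCombinatorics {G : Type*} [Group G] (ℓ m : G → ℝ) : Prop :=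
  OverlapSet ℓ ∩ DisjointSet m = ∅ ∧ DisjointSet ℓ ∩ OverlapSet m = ∅

/-- `ℓ` and `m` are coherently oriented if on `O^ℓ ∩ O^m` the strict inequalities
`ℓ(gh⁻¹) < ℓ(gh)` and `m(gh⁻¹) < m(gh)` are equivalent. -/
def CoherentlyOriented {G : Type*} [Group G] (ℓ m : G → ℝ) : Prop :=
  ∀ p ∈ OverlapSet ℓ ∩ OverlapSet m,
    (ℓ (p.1 * p.2⁻¹) < ℓ (p.1 * p.2) ↔ m (p.1 * p.2⁻¹) < m (p.1 * p.2))

/-- `(g,h)` is a good pair for `ℓ` if `0 < ℓ(g)+ℓ(h)−ℓ(gh⁻¹) < 2·min{ℓ(g),ℓ(h)}`. -/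
def GoodPair {G : Type*} [Group G] (ℓ : G → ℝ) (g h : G) : Prop :=
  0 < ℓ g + ℓ h - ℓ (g * h⁻¹) ∧
  ℓ g + ℓ h - ℓ (g * h⁻¹) < 2 * min (ℓ g) (ℓ h)

section AuxLemmas

variable {G : Type*} [Group G]

private lemma max_eq_of_ne {a b s : ℝ} (hmax : max a b = s) (ha : a ≠ s) : b = s := by
  rcases max_choice a b with h | h <;> rw [h] at hmax
  · exact absurd hmax ha
  · exact hmax

private lemma sq_len {ℓ : G → ℝ} (hℓ : IsLengthFunction ℓ) (x : G) :
    ℓ (x * x) = 2 * ℓ x := by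
  obtain ⟨l0, l1, l2, l3, l4, l5, -⟩ := id hℓ
  have hx1 : x * x⁻¹ = 1 := by group
  rcases (l0 x).lt_or_eq with hx | hx
  · rcases l5 x x hx hx with ⟨heq, hlt⟩ | hmax
    · rw [heq, hx1, l1] at hlt; linarith
    · rw [hx1, l1, max_eq_left (l0 (x*x))] at hmax
      linarith
  · rcases l4 x x with heq | hmax
    · rw [heq, hx1, l1, ← hx]; norm_num
    · have h1 := le_trans (le_max_left (ℓ (x*x)) (ℓ (x*x⁻¹))) hmax
      have h2 := l0 (x*x)
      linarith [hx.symm.le]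

private lemma Rstar {ℓ m : G → ℝ} (hℓ : IsLengthFunction ℓ) (hm : IsLengthFunction m)
    (hc : ∀ p : G × G, p ∈ DisjointSet ℓ → p ∉ OverlapSet m)
    (g h : G) (hg0 : ℓ g = 0) (ht : 0 < ℓ h) (hmg : 0 < m g)
    (hα : ℓ (g * h) < ℓ h) (hβ : ℓ (g * h⁻¹) < ℓ h) : False := by
  obtain ⟨l0, l1, l2, l3, l4, l5, -⟩ := id hℓ
  obtain ⟨m0, m1, m2, m3, m4, m5, -⟩ := id hm
  have hne1 : h ≠ 1 := by rintro rfl; rw [l1] at ht; exact lt_irrefl _ ht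
  -- conjugation / inverse facts
  have lhg : ℓ (h * g) = ℓ (g * h) := by
    have := l3 (g * h) h; rwa [show h * (g * h) * h⁻¹ = h * g by group] at this
  have mhg : m (h * g) = m (g * h) := by
    have := m3 (g * h) h; rwa [show h * (g * h) * h⁻¹ = h * g by group] at this
  have lh'g : ℓ (h⁻¹ * g) = ℓ (g * h⁻¹) := by
    have := l3 (g * h⁻¹) h⁻¹
    rwa [show h⁻¹ * (g * h⁻¹) * h⁻¹⁻¹ = h⁻¹ * g by group] at this
  have mh'g : m (h⁻¹ * g) = m (g * h⁻¹) := by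
    have := m3 (g * h⁻¹) h⁻¹
    rwa [show h⁻¹ * (g * h⁻¹) * h⁻¹⁻¹ = h⁻¹ * g by group] at this
  have lhinv : ℓ h⁻¹ = ℓ h := (l2 h).symm
  have mhinv : m h⁻¹ = m h := (m2 h).symm
  -- Step 1 : ℓ (g*h*g) = ℓ h
  have v2 : ℓ (g * h * g⁻¹) = ℓ h := l3 h g
  have L2 : ℓ (g * h * g) = ℓ h := by
    rcases l4 (g * h) g with e | e
    · rwa [v2] at e
    · exfalso
      have h1 : ℓ (g*h*g⁻¹) ≤ ℓ (g*h) + ℓ g := le_trans (le_max_right _ _) e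
      rw [v2, hg0] at h1; linarith
  -- D-pair (g*h, g)
  have hD1 : ((g*h, g) : G × G) ∈ DisjointSet ℓ := by
    refine ⟨?_, ?_, ?_⟩
    · intro e; exact hne1 (mul_eq_left.mp e)
    · show ℓ (g*h*g) = ℓ (g*h*g⁻¹); rw [L2, v2]
    · show ℓ (g*h) + ℓ g < ℓ (g*h*g); rw [L2, hg0]; linarith
  have M1 : m (g*h*g) = m h := by
    have hn := hc _ hD1
    have e : m (g*h*g) = m (g*h*g⁻¹) := by
      by_contra hx; exact hn ⟨hD1.1, hx⟩
    rw [e]; exact m3 h g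
  -- Step 3 : pair (h*g, g)
  have L4 : ℓ (h*g*g) = ℓ h := by
    rcases l4 (h*g) g with e | e
    · rwa [show h*g*g⁻¹ = h by group] at e
    · exfalso
      have h1 : ℓ (h*g*g⁻¹) ≤ ℓ (h*g) + ℓ g := le_trans (le_max_right _ _) e
      rw [show h*g*g⁻¹ = h by group, lhg, hg0] at h1; linarith
  have hD2 : ((h*g, g) : G × G) ∈ DisjointSet ℓ := by
    refine ⟨?_, ?_, ?_⟩
    · intro e; exact hne1 (mul_eq_right.mp e)
    · show ℓ (h*g*g) = ℓ (h*g*g⁻¹)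
      rw [L4, show h*g*g⁻¹ = h by group]
    · show ℓ (h*g) + ℓ g < ℓ (h*g*g); rw [L4, lhg, hg0]; linarith
  have M2 : m (h*g*g) = m h := by
    have hn := hc _ hD2
    have e : m (h*g*g) = m (h*g*g⁻¹) := by
      by_contra hx; exact hn ⟨hD2.1, hx⟩
    rw [e, show h*g*g⁻¹ = h by group]
  -- Step 4 : pair (h⁻¹*g, g)
  have L5 : ℓ (h⁻¹*g*g) = ℓ h := by
    rcases l4 (h⁻¹*g) g with e | e
    · rwa [show h⁻¹*g*g⁻¹ = h⁻¹ by group, lhinv] at e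
    · exfalso
      have h1 : ℓ (h⁻¹*g*g⁻¹) ≤ ℓ (h⁻¹*g) + ℓ g := le_trans (le_max_right _ _) e
      rw [show h⁻¹*g*g⁻¹ = h⁻¹ by group, lhinv, lh'g, hg0] at h1; linarith
  have hD3 : ((h⁻¹*g, g) : G × G) ∈ DisjointSet ℓ := by
    refine ⟨?_, ?_, ?_⟩
    · intro e
      have e2 : h⁻¹ = 1 := mul_eq_right.mp e
      exact hne1 (by rwa [inv_eq_one] at e2)
    · show ℓ (h⁻¹*g*g) = ℓ (h⁻¹*g*g⁻¹)
      rw [L5, show h⁻¹*g*g⁻¹ = h⁻¹ by group, lhinv]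
    · show ℓ (h⁻¹*g) + ℓ g < ℓ (h⁻¹*g*g); rw [L5, lh'g, hg0]; linarith
  have M3 : m (h⁻¹*g*g) = m h := by
    have hn := hc _ hD3
    have e : m (h⁻¹*g*g) = m (h⁻¹*g*g⁻¹) := by
      by_contra hx; exact hn ⟨hD3.1, hx⟩
    rw [e, show h⁻¹*g*g⁻¹ = h⁻¹ by group, mhinv]
  -- Step 5 : ℓ (g*h*g*h⁻¹) = 2 ℓ h
  have hsq : ℓ ((h*g)*(h*g)) = 2 * ℓ (h*g) := sq_len hℓ (h*g)
  have LK : ℓ (g*h*g*h⁻¹) = 2 * ℓ h := by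
    have hpos : 0 < ℓ (g*h*g) := by rw [L2]; exact ht
    rcases l5 h (g*h*g) ht hpos with ⟨heq, hlt⟩ | hmax
    · exfalso
      rw [show h * (g*h*g) = (h*g)*(h*g) by group, hsq, lhg, L2] at hlt
      linarith
    · rw [show h * (g*h*g) = (h*g)*(h*g) by group, hsq, lhg,
        show h * (g*h*g)⁻¹ = (g*h*g*h⁻¹)⁻¹ by group, ← l2 (g*h*g*h⁻¹), L2] at hmax
      have hne2 : 2 * ℓ (g*h) ≠ ℓ h + ℓ h := by linarith
      have := max_eq_of_ne hmax hne2
      linarith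
  -- Step 6 : ℓ (g*(h*g*h⁻¹)⁻¹) = 2 ℓ h
  have LK' : ℓ (g*(h*g*h⁻¹)⁻¹) = 2 * ℓ h := by
    rcases l4 g (h*g*h⁻¹) with e | e
    · rw [show g * (h*g*h⁻¹) = g*h*g*h⁻¹ by group, LK] at e; exact e.symm
    · exfalso
      have h1 : ℓ (g*(h*g*h⁻¹)) ≤ ℓ g + ℓ (h*g*h⁻¹) := le_trans (le_max_left _ _) e
      rw [show g * (h*g*h⁻¹) = g*h*g*h⁻¹ by group, LK, l3 g h, hg0] at h1
      linarith
  -- Step 7 : D-pair (g, h*g*h⁻¹), m-consequences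
  have hD4 : ((g, h*g*h⁻¹) : G × G) ∈ DisjointSet ℓ := by
    refine ⟨?_, ?_, ?_⟩
    · intro e
      have e' : g = h*g*h⁻¹ := e
      have e2 : g * (h*g*h⁻¹) = g * g := by rw [← e']
      have e3 : ℓ (g*(h*g*h⁻¹)) = 0 := by rw [e2, sq_len hℓ g, hg0]; ring
      rw [show g * (h*g*h⁻¹) = g*h*g*h⁻¹ by group, LK] at e3; linarith
    · show ℓ (g*(h*g*h⁻¹)) = ℓ (g*(h*g*h⁻¹)⁻¹)
      rw [show g * (h*g*h⁻¹) = g*h*g*h⁻¹ by group, LK, LK']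
    · show ℓ g + ℓ (h*g*h⁻¹) < ℓ (g*(h*g*h⁻¹))
      rw [show g * (h*g*h⁻¹) = g*h*g*h⁻¹ by group, LK, l3 g h, hg0]; linarith
  have MK : m (g*(h*g*h⁻¹)) = m (g*(h*g*h⁻¹)⁻¹) := by
    have hn := hc _ hD4
    by_contra hx; exact hn ⟨hD4.1, hx⟩
  have hmghgh : 0 < m (h*g*h⁻¹) := by rw [m3 g h]; exact hmg
  have MKge : 2 * m g ≤ m (g*(h*g*h⁻¹)) := by
    rcases m5 g (h*g*h⁻¹) hmg hmghgh with ⟨heq, hlt⟩ | hmax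
    · rw [m3 g h] at hlt; linarith
    · rw [← MK, max_self, m3 g h] at hmax; linarith
  have MKn : 2 * m g ≤ m (g*h*g*h⁻¹) := by
    rw [show (g*h*g*h⁻¹ : G) = g*(h*g*h⁻¹) by group]; exact MKge
  -- case split on m h
  rcases (m0 h).lt_or_eq with hs | hs
  · -- m h > 0
    have claimA : 0 < m (g*h) → m (g*h) + m g ≤ m h := by
      intro hA
      have hA' : 0 < m (h*g) := by rw [mhg]; exact hA
      rcases m5 (h*g) g hA' hmg with ⟨heq, hlt⟩ | hmax
      · rw [M2, mhg] at hlt; linarith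
      · rw [M2, show h*g*g⁻¹ = h by group, max_self, mhg] at hmax
        linarith
    have claimB : 0 < m (g*h⁻¹) → m (g*h⁻¹) + m g ≤ m h := by
      intro hB
      have hB' : 0 < m (h⁻¹*g) := by rw [mh'g]; exact hB
      rcases m5 (h⁻¹*g) g hB' hmg with ⟨heq, hlt⟩ | hmax
      · rw [M3, mh'g] at hlt; linarith
      · rw [M3, show h⁻¹*g*g⁻¹ = h⁻¹ by group, mhinv, max_self, mh'g] at hmax
        linarith
    have mhginv : m (h*g⁻¹) = m (g*h⁻¹) := by
      rw [m2 (h*g⁻¹), show (h*g⁻¹)⁻¹ = g*h⁻¹ by group]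
    rcases m5 h g hs hmg with ⟨heq, hlt⟩ | hmax
    · rw [mhg] at hlt
      have hA : 0 < m (g*h) := by linarith [m0 h]
      have := claimA hA; linarith
    · rcases max_choice (m (h*g)) (m (h*g⁻¹)) with e | e <;> rw [e] at hmax
      · rw [mhg] at hmax
        have hA : 0 < m (g*h) := by linarith [m0 h]
        have := claimA hA; linarith
      · rw [mhginv] at hmax
        have hB : 0 < m (g*h⁻¹) := by linarith [m0 h]
        have := claimB hB; linarith
  · -- m h = 0  (hs : 0 = m h)
    have M1z : m (g*h*g) = 0 := by rw [M1, ← hs]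
    have M2z : m (h*g*g) = 0 := by rw [M2, ← hs]
    have mhz : m h⁻¹ = 0 := by rw [mhinv, ← hs]
    have mK2A : m (g*h*g*h⁻¹) = 2 * m (g*h) := by
      rcases m4 (g*h*g) h⁻¹ with e | e
      · rwa [show g*h*g*h⁻¹⁻¹ = (g*h)*(g*h) by group, sq_len hm (g*h)] at e
      · exfalso
        rw [M1z, mhz] at e
        have h1 : m (g*h*g*h⁻¹) ≤ 0 :=
          le_trans (le_max_left _ _) (by linarith [e])
        linarith
    have hA : 0 < m (g*h) := by
      have := MKn; rw [mK2A] at this; linarith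
    have hA' : 0 < m (h*g) := by rw [mhg]; exact hA
    rcases m5 (h*g) g hA' hmg with ⟨heq, hlt⟩ | hmax
    · rw [M2z] at hlt; linarith [m0 (h*g)]
    · rw [M2z, show h*g*g⁻¹ = h by group, ← hs, max_self] at hmax
      linarith

private lemma dichot {ℓ m : G → ℝ} (hℓ : IsLengthFunction ℓ) (hm : IsLengthFunction m)
    (hc : ∀ p : G × G, p ∈ DisjointSet ℓ → p ∉ OverlapSet m)
    (g h : G) (hg : 0 < ℓ g ∨ 0 < m g) (hh : 0 < ℓ h ∨ 0 < m h) :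
    (ℓ (g*h) = ℓ (g*h⁻¹) ∧ ℓ g + ℓ h < ℓ (g*h)) ∨
      max (ℓ (g*h)) (ℓ (g*h⁻¹)) = ℓ g + ℓ h := by
  obtain ⟨l0, l1, l2, l3, l4, l5, -⟩ := id hℓ
  rcases (l0 g).lt_or_eq with hgpos | hgz
  · rcases (l0 h).lt_or_eq with hhpos | hhz
    · exact l5 g h hgpos hhpos
    · -- ℓ h = 0, ℓ g > 0
      have hmh : 0 < m h := by
        rcases hh with h' | h'
        · exfalso; rw [← hhz] at h'; exact lt_irrefl _ h'
        · exact h'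
      have hmax2 : ℓ g ≤ max (ℓ (g*h)) (ℓ (g*h⁻¹)) := by
        by_contra hx
        push_neg at hx
        have e1 : ℓ (h*g) = ℓ (g*h) := by
          have := l3 (g * h) h; rwa [show h * (g * h) * h⁻¹ = h * g by group] at this
        have e2 : ℓ (h*g⁻¹) = ℓ (g*h⁻¹) := by
          rw [l2 (h*g⁻¹), show (h*g⁻¹)⁻¹ = g*h⁻¹ by group]
        exact Rstar hℓ hm hc h g hhz.symm hgpos hmh
          (by rw [e1]; exact lt_of_le_of_lt (le_max_left _ _) hx)
          (by rw [e2]; exact lt_of_le_of_lt (le_max_right _ _) hx)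
      rcases l4 g h with e | e
      · rw [← e, max_self] at hmax2
        rcases hmax2.lt_or_eq with hlt | heqq
        · left; exact ⟨e, by rw [← hhz, add_zero]; exact hlt⟩
        · right; rw [← e, max_self, ← hhz, add_zero]; exact heqq.symm
      · right
        exact le_antisymm e (by rw [← hhz, add_zero]; exact hmax2)
  · -- ℓ g = 0
    have hmg : 0 < m g := by
      rcases hg with h' | h'
      · exfalso; rw [← hgz] at h'; exact lt_irrefl _ h'
      · exact h'
    rcases (l0 h).lt_or_eq with hhpos | hhz
    · have hmax2 : ℓ h ≤ max (ℓ (g*h)) (ℓ (g*h⁻¹)) := by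
        by_contra hx
        push_neg at hx
        exact Rstar hℓ hm hc g h hgz.symm hhpos hmg
          (lt_of_le_of_lt (le_max_left _ _) hx)
          (lt_of_le_of_lt (le_max_right _ _) hx)
      rcases l4 g h with e | e
      · rw [← e, max_self] at hmax2
        rcases hmax2.lt_or_eq with hlt | heqq
        · left; exact ⟨e, by rw [← hgz, zero_add]; exact hlt⟩
        · right; rw [← e, max_self, ← hgz, zero_add]; exact heqq.symm
      · right
        exact le_antisymm e (by rw [← hgz, zero_add]; exact hmax2)
    · -- both zero
      rcases l4 g h with e | e
      · rcases (l0 (g*h)).lt_or_eq with hp | hp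
        · left; refine ⟨e, ?_⟩; rw [← hgz, ← hhz]; simpa using hp
        · right; rw [← e, max_self, ← hgz, ← hhz]; linarith
      · right
        refine le_antisymm e ?_
        rw [← hgz, ← hhz]
        have := le_trans (l0 (g*h)) (le_max_left (ℓ (g*h)) (ℓ (g*h⁻¹)))
        linarith

end AuxLemmas

/-- if `ℓ` and `m` have compatible combinatorics and are coherently
oriented, then `ℓ + m` satisfies length-function axiom V. -/
theorem sum_axiom_V {G : Type*} [Group G] (ℓ m : G → ℝ)
    (hℓ : IsLengthFunction ℓ) (hm : IsLengthFunction m)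
    (hcc : CompatibleCombinatorics ℓ m) (hco : CoherentlyOriented ℓ m) :
    ∀ g h : G, 0 < ℓ g + m g → 0 < ℓ h + m h →
      (ℓ (g * h) + m (g * h) = ℓ (g * h⁻¹) + m (g * h⁻¹) ∧
        (ℓ g + m g) + (ℓ h + m h) < ℓ (g * h) + m (g * h)) ∨
      max (ℓ (g * h) + m (g * h)) (ℓ (g * h⁻¹) + m (g * h⁻¹)) =
        (ℓ g + m g) + (ℓ h + m h) := by
  intro g h hgp hhp
  have l0 := hℓ.1
  have m0 := hm.1
  have l1 : ℓ 1 = 0 := hℓ.2.1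
  have m1 : m 1 = 0 := hm.2.1
  by_cases hgh : g = h
  · subst hgh
    right
    have e1 : g * g⁻¹ = 1 := by group
    rw [e1, l1, m1, sq_len hℓ g, sq_len hm g]
    have hle : (0:ℝ) + 0 ≤ 2 * ℓ g + 2 * m g := by linarith [l0 g, m0 g]
    rw [max_eq_left hle]; ring
  · have hc1 : ∀ p : G × G, p ∈ DisjointSet ℓ → p ∉ OverlapSet m := by
      intro p hp hq
      have hmem : p ∈ DisjointSet ℓ ∩ OverlapSet m := ⟨hp, hq⟩
      rw [hcc.2] at hmem; exact hmem
    have hc2 : ∀ p : G × G, p ∈ DisjointSet m → p ∉ OverlapSet ℓ := by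
      intro p hp hq
      have hmem : p ∈ OverlapSet ℓ ∩ DisjointSet m := ⟨hq, hp⟩
      rw [hcc.1] at hmem; exact hmem
    have hg : 0 < ℓ g ∨ 0 < m g := by
      rcases (l0 g).lt_or_eq with h' | h'
      · exact Or.inl h'
      · right; rw [← h'] at hgp; linarith
    have hh : 0 < ℓ h ∨ 0 < m h := by
      rcases (l0 h).lt_or_eq with h' | h'
      · exact Or.inl h'
      · right; rw [← h'] at hhp; linarith
    have Dl := dichot hℓ hm hc1 g h hg hh
    have Dm := dichot hm hℓ hc2 g h hg.symm hh.symm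
    rcases Dl with ⟨le, llt⟩ | lmax
    · rcases Dm with ⟨me, mlt⟩ | mmax
      · left; exact ⟨by rw [le, me], by linarith⟩
      · have hDmem : ((g,h) : G × G) ∈ DisjointSet ℓ := ⟨hgh, le, llt⟩
        have hnO := hc1 _ hDmem
        have me : m (g*h) = m (g*h⁻¹) := by
          by_contra hx; exact hnO ⟨hgh, hx⟩
        rw [← me, max_self] at mmax
        left; exact ⟨by rw [le, me], by linarith⟩
    · rcases Dm with ⟨me, mlt⟩ | mmax
      · have hDmem : ((g,h) : G × G) ∈ DisjointSet m := ⟨hgh, me, mlt⟩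
        have hnO := hc2 _ hDmem
        have le : ℓ (g*h) = ℓ (g*h⁻¹) := by
          by_contra hx; exact hnO ⟨hgh, hx⟩
        rw [← le, max_self] at lmax
        left; exact ⟨by rw [le, me], by linarith⟩
      · by_cases le : ℓ (g*h) = ℓ (g*h⁻¹)
        · rw [← le, max_self] at lmax
          right
          rw [← le, max_add_add_left, mmax, lmax]
          ring
        · by_cases me : m (g*h) = m (g*h⁻¹)
          · rw [← me, max_self] at mmax
            right
            rw [← me, max_add_add_right, lmax, mmax]
            ring
          · have hOl : ((g,h) : G × G) ∈ OverlapSet ℓ := ⟨hgh, le⟩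
            have hOm : ((g,h) : G × G) ∈ OverlapSet m := ⟨hgh, me⟩
            have hiff := hco (g,h) ⟨hOl, hOm⟩
            rcases lt_trichotomy (ℓ (g*h⁻¹)) (ℓ (g*h)) with hlt | heq | hgt
            · have hmlt : m (g*h⁻¹) < m (g*h) := hiff.mp hlt
              right
              rw [max_eq_left (le_of_lt hlt)] at lmax
              rw [max_eq_left (le_of_lt hmlt)] at mmax
              rw [max_eq_left (by linarith :
                ℓ (g*h⁻¹) + m (g*h⁻¹) ≤ ℓ (g*h) + m (g*h))]
              linarith
            · exact absurd heq.symm le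
            · have hmgt : m (g*h) < m (g*h⁻¹) := by
                rcases lt_trichotomy (m (g*h⁻¹)) (m (g*h)) with h1 | h1 | h1
                · exact absurd (hiff.mpr h1) (not_lt.mpr (le_of_lt hgt))
                · exact absurd h1.symm me
                · exact h1
              right
              rw [max_eq_right (le_of_lt hgt)] at lmax
              rw [max_eq_right (le_of_lt hmgt)] at mmax
              rw [max_eq_right (by linarith :
                ℓ (g*h) + m (g*h) ≤ ℓ (g*h⁻¹) + m (g*h⁻¹))]
              linarith
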